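/- Let K_B ⊆ cl D be a compact set that is norming for O(cl D) and contained in every compact set norming for O(cl D). Then K_B ∩ (I₀ × 𝔻) = ∅, i.e. K_B contains no point (x, w) with x ∈ (1/2, 1) and |w| < 1. -/

import Mathlib

open Set Complex Topology Filter

noncomputable section

/-- The bounded Hartogs domain `D ⊂ ℂ²` from the paper. -/
def domD : Set (ℂ × ℂ) :=
  {p | ∃ r φ : ℝ, 1 / 2 < r ∧ r < 1 ∧ 0 < φ ∧ φ < 2 * Real.pi ∧
    p.1 = (r : ℂ) * Complex.exp (φ * Complex.I) ∧
    (φ ≤ Real.pi / 2 → ‖p.2‖ < 1) ∧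
    (Real.pi / 2 < φ → φ < 3 * Real.pi / 2 → ‖p.2‖ < 3) ∧
    (3 * Real.pi / 2 ≤ φ → 2 < ‖p.2‖ ∧ ‖p.2‖ < 3)}

/-- `K` is norming for the family `F` of functions on `closure S`. -/
def IsNorming {E : Type*} [TopologicalSpace E] (S K : Set E) (F : Set (E → ℂ)) : Prop :=
  ∀ f ∈ F, sSup ((fun p => ‖f p‖) '' K) =
    sSup ((fun p => ‖f p‖) '' closure S)

/-- `O(cl S)`: functions extending holomorphically to an open neighborhood of `closure S`. -/
def Ocl {E : Type*} [NormedAddCommGroup E] [NormedSpace ℂ E] (S : Set E) :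
    Set (E → ℂ) :=
  {f | ∃ U : Set E, IsOpen U ∧ closure S ⊆ U ∧ DifferentiableOn ℂ f U}

/-- `A(S)`: functions continuous on `closure S` and holomorphic on `S`. -/
def Acl {E : Type*} [NormedAddCommGroup E] [NormedSpace ℂ E] (S : Set E) :
    Set (E → ℂ) :=
  {f | ContinuousOn f (closure S) ∧ DifferentiableOn ℂ f S}

/-- `K` is the minimal compact norming set for the family `F` on `closure S`
(i.e. the Shilov-type boundary associated with `F`). -/
def IsShilovFor {E : Type*} [NormedAddCommGroup E] [NormedSpace ℂ E]
    (S : Set E) (F : Set (E → ℂ)) (K : Set E) : Prop :=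
  IsCompact K ∧ K ⊆ closure S ∧ IsNorming S K F ∧
    ∀ K' : Set E, IsCompact K' → K' ⊆ closure S → IsNorming S K' F → K ⊆ K'

/-! ### Auxiliary lemmas -/

lemma domD_bounded : Bornology.IsBounded domD := by
  apply (Metric.isBounded_closedBall (x := (0 : ℂ × ℂ)) (r := 3)).subset
  rintro ⟨z, w⟩ ⟨r, φ, hr1, hr2, hφ1, hφ2, hz, h1, h2, h3⟩
  have hz1 : ‖z‖ ≤ 3 := by
    rw [show z = (r:ℂ) * Complex.exp (φ * Complex.I) from hz, norm_mul, Complex.norm_real, Real.norm_eq_abs, Complex.norm_exp_ofReal_mul_I]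
    rw [abs_of_pos (by linarith)]
    linarith
  have hw1 : ‖w‖ ≤ 3 := by
    rcases le_or_gt φ (Real.pi / 2) with h | h
    · have := h1 h; linarith
    · rcases lt_or_ge φ (3 * Real.pi / 2) with h' | h'
      · have := h2 h h'; linarith
      · have := (h3 h').2; linarith
  simp only [Metric.mem_closedBall, dist_zero_right, Prod.norm_def,
    max_le_iff]
  exact ⟨hz1, hw1⟩

lemma compact_clD : IsCompact (closure domD) := domD_bounded.isCompact_closure

/-- The base point `( (3/4)·e^{iπ}, 5/2 )` lies in `D` with `|w| ≥ 1`. -/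
lemma p0_mem : (((3/4 : ℝ) : ℂ) * Complex.exp (Real.pi * Complex.I), ((5/2 : ℝ) : ℂ)) ∈ domD := by
  have hπ := Real.pi_pos
  refine ⟨3/4, Real.pi, by norm_num, by norm_num, hπ, by linarith, by push_cast; ring_nf, ?_, ?_, ?_⟩
  · intro h; linarith
  · intro _ _
    simp only [Complex.norm_real, Real.norm_eq_abs]
    rw [abs_of_pos (by norm_num)]; norm_num
  · intro h; linarith

/-- If `q ∈ cl D` with `|q₂| < 1`, then the whole closed unit disc fiber over `q₁`
lies in `cl D`. -/
lemma fiber_mem {q : ℂ × ℂ} (hq : q ∈ closure domD) (hq2 : ‖q.2‖ < 1) :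
    ∀ w' : ℂ, ‖w'‖ ≤ 1 → (q.1, w') ∈ closure domD := by
  have key : ∀ w' : ℂ, ‖w'‖ < 1 → (q.1, w') ∈ closure domD := by
    intro w' hw'
    rw [mem_closure_iff_seq_limit] at hq
    obtain ⟨u, hu, hlim⟩ := hq
    have h1 : Filter.Tendsto (fun n => ((u n).1, w')) Filter.atTop (𝓝 (q.1, w')) :=
      ((continuous_fst.tendsto q).comp hlim).prodMk_nhds tendsto_const_nhds
    have h2 : ∀ᶠ n in Filter.atTop, ‖(u n).2‖ < 1 :=
      Filter.Tendsto.eventually_lt_const hq2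
        ((continuous_norm.tendsto q.2).comp ((continuous_snd.tendsto q).comp hlim))
    refine mem_closure_of_tendsto h1 ?_
    filter_upwards [h2] with n hn
    obtain ⟨r, φ, a1, a2, a3, a4, a5, b1, b2, b3⟩ := hu n
    refine ⟨r, φ, a1, a2, a3, a4, a5, fun _ => hw',
      fun _ _ => hw'.trans (by norm_num), fun h => ?_⟩
    exact absurd ((b3 h).1.trans hn) (by norm_num)
  intro w' hw'
  rcases lt_or_eq_of_le hw' with h | h
  · exact key w' h
  · have hcont : Continuous fun t : ℝ => (q.1, (t : ℂ) * w') := by continuity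
    have htend : Filter.Tendsto (fun t : ℝ => (q.1, (t : ℂ) * w')) (𝓝[<] (1 : ℝ))
        (𝓝 (q.1, w')) := by
      have h' := (hcont.tendsto (1 : ℝ)).mono_left
        (nhdsWithin_le_nhds (s := Set.Iio (1 : ℝ)))
      simpa using h'
    rw [← closure_closure (s := domD)]
    refine mem_closure_of_tendsto htend ?_
    filter_upwards [Ioo_mem_nhdsLT_of_mem (by norm_num : (1:ℝ) ∈ Set.Ioc (0:ℝ) 1)] with t ht
    apply key
    rw [norm_mul, Complex.norm_real, Real.norm_eq_abs, ← h, abs_of_pos ht.1]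
    nlinarith [ht.1, ht.2, (norm_nonneg w')]

/-- The compact set `cl D ∩ {|w| ≥ 1}` is norming for `O(cl D)`. -/
lemma norming_K' :
    IsNorming domD (closure domD ∩ {p : ℂ × ℂ | 1 ≤ ‖p.2‖}) (Ocl domD) := by
  rintro f ⟨U, hUo, hUsub, hUdiff⟩
  set K' := closure domD ∩ {p : ℂ × ℂ | 1 ≤ ‖p.2‖} with hK'
  set g := fun p : ℂ × ℂ => ‖f p‖ with hg
  have hfc : ContinuousOn f (closure domD) := hUdiff.continuousOn.mono hUsub
  have hgc : ContinuousOn g (closure domD) := continuous_norm.comp_continuousOn hfc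
  have hbdd : BddAbove (g '' closure domD) := (compact_clD.image_of_continuousOn hgc).bddAbove
  have hbdd' : BddAbove (g '' K') := hbdd.mono (image_mono inter_subset_left)
  have hp0K' : (((3/4 : ℝ) : ℂ) * Complex.exp (Real.pi * Complex.I), ((5/2 : ℝ) : ℂ)) ∈ K' := by
    refine ⟨subset_closure p0_mem, ?_⟩
    simp only [mem_setOf_eq, Complex.norm_real, Real.norm_eq_abs]
    rw [abs_of_pos (by norm_num)]; norm_num
  apply le_antisymm
  · exact csSup_le_csSup hbdd ⟨_, mem_image_of_mem _ hp0K'⟩ (image_mono inter_subset_left)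
  · obtain ⟨q, hqmem, hqmax⟩ := compact_clD.exists_isMaxOn
      ⟨_, subset_closure p0_mem⟩ hgc
    have hsup : sSup (g '' closure domD) = g q := by
      apply IsGreatest.csSup_eq
      refine ⟨mem_image_of_mem _ hqmem, ?_⟩
      rintro _ ⟨x, hx, rfl⟩
      exact hqmax hx
    rw [hsup]
    by_cases hq2 : 1 ≤ ‖q.2‖
    · exact le_csSup hbdd' (mem_image_of_mem _ ⟨hqmem, hq2⟩)
    · push_neg at hq2
      have hball : Metric.closedBall (0 : ℂ) 1 ⊆ {w : ℂ | (q.1, w) ∈ U} := by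
        intro w hw
        have hw1 : ‖w‖ ≤ 1 := by
          simpa using mem_closedBall_zero_iff.mp hw
        exact hUsub (fiber_mem hqmem hq2 w hw1)
    -- max modulus on the fiber
      have hd : DiffContOnCl ℂ (fun w => f (q.1, w)) (Metric.ball (0 : ℂ) 1) := by
        apply DifferentiableOn.diffContOnCl
        rw [closure_ball (0 : ℂ) one_ne_zero]
        exact (hUdiff.comp ((differentiableOn_const _).prodMk differentiableOn_id)
          (fun w hw => hball hw))
      have hfr : ∀ z ∈ frontier (Metric.ball (0 : ℂ) 1),
          ‖f (q.1, z)‖ ≤ sSup (g '' K') := by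
        intro z hz
        rw [frontier_ball (0 : ℂ) one_ne_zero, mem_sphere_zero_iff_norm] at hz
        have habs : ‖z‖ = 1 := by simpa using hz
        have hmem : (q.1, z) ∈ closure domD := fiber_mem hqmem hq2 z habs.le
        exact le_csSup hbdd' (mem_image_of_mem _ ⟨hmem, habs.ge⟩)
      have hzcl : q.2 ∈ closure (Metric.ball (0 : ℂ) 1) := by
        rw [closure_ball (0 : ℂ) one_ne_zero]
        exact mem_closedBall_zero_iff.mpr (by simpa using hq2.le)
      have := Complex.norm_le_of_forall_mem_frontier_norm_le Metric.isBounded_ball hd hfr hzcl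
      simpa [hg] using this

theorem stmt13 (KB : Set (ℂ × ℂ)) (hKB : IsShilovFor domD (Ocl domD) KB) :
    KB ∩ {p : ℂ × ℂ | (∃ x : ℝ, 1 / 2 < x ∧ x < 1 ∧ p.1 = (x : ℂ)) ∧ ‖p.2‖ < 1} = ∅ := by
  have hK'c : IsCompact (closure domD ∩ {p : ℂ × ℂ | 1 ≤ ‖p.2‖}) :=
    compact_clD.inter_right (isClosed_le continuous_const
      (continuous_norm.comp continuous_snd))
  have hsub : KB ⊆ closure domD ∩ {p : ℂ × ℂ | 1 ≤ ‖p.2‖} :=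
    hKB.2.2.2 _ hK'c inter_subset_left norming_K'
  ext p
  simp only [mem_inter_iff, mem_setOf_eq, mem_empty_iff_false, iff_false, not_and]
  intro hpK hslit
  have h2 : 1 ≤ ‖p.2‖ := (hsub hpK).2
  linarith [hslit.2]
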